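/- If T is a bounded linear operator on a complex Hilbert space H satisfying T² = 0, then T is a complex symmetric operator; that is, there exists a conjugation C on H such that T = C ∘ T* ∘ C. -/

import Mathlib

open ContinuousLinearMap

/-- A conjugation on a complex Hilbert space: a conjugate-linear, isometric involution. -/
def IsConjugation {H : Type*} [NormedAddCommGroup H] [InnerProductSpace ℂ H]
    (C : H → H) : Prop :=
  (∀ (a : ℂ) (x y : H), C (a • x + y) = (starRingEnd ℂ a) • C x + C y) ∧
  (∀ x, ‖C x‖ = ‖x‖) ∧
  (∀ x, C (C x) = x)

section NilpCSOSection

open Submodule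

noncomputable section

namespace NilpCSO

attribute [local instance] InnerProductSpace.complexToReal

variable {H : Type*} [NormedAddCommGroup H] [InnerProductSpace ℂ H]

local notation "⟪" x ", " y "⟫" => @inner ℂ _ _ x y

lemma rinner_eq (x y : H) : @inner ℝ H _ x y = (⟪x, y⟫).re := rfl

/-- Pairs of vectors with real inner product. -/
def RIP (x y : H) : Prop := (starRingEnd ℂ) ⟪x, y⟫ = ⟪x, y⟫

lemma RIP.comm {x y : H} (h : RIP x y) : RIP y x := by
  unfold RIP at h ⊢
  rw [inner_conj_symm] at h ⊢
  rw [← h]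

lemma RIP.im_eq {x y : H} (h : RIP x y) : (⟪x, y⟫).im = 0 := by
  have := congrArg Complex.im h
  simp only [Complex.conj_im] at this
  linarith

/-- The set of `x` with `⟪x,y⟫` real, as a real submodule. -/
def realLeft (y : H) : Submodule ℝ H where
  carrier := {x | RIP x y}
  zero_mem' := by simp [RIP]
  add_mem' := by
    intro a b ha hb
    simp only [RIP, Set.mem_setOf_eq, inner_add_left, map_add] at *
    rw [ha, hb]
  smul_mem' := by
    intro r x hx
    simp only [RIP, Set.mem_setOf_eq] at *
    rw [RCLike.real_smul_eq_coe_smul (K := ℂ) r x, inner_smul_real_left]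
    simp only [Complex.real_smul, map_mul, Complex.conj_ofReal, hx]

lemma isClosed_realLeft (y : H) : IsClosed ((realLeft y : Submodule ℝ H) : Set H) := by
  have : ((realLeft y : Submodule ℝ H) : Set H) =
      (fun x : H => (starRingEnd ℂ) ⟪x, y⟫ - ⟪x, y⟫) ⁻¹' {0} := by
    ext x
    simp [realLeft, RIP, sub_eq_zero]
  rw [this]
  apply IsClosed.preimage _ isClosed_singleton
  have hc : Continuous fun x : H => ⟪x, y⟫ := Continuous.inner continuous_id continuous_const
  exact ((Complex.continuous_conj).comp hc).sub hc

/-- The set of `y` with `⟪x,y⟫` real, as a real submodule. -/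
def realRight (x : H) : Submodule ℝ H where
  carrier := {y | RIP x y}
  zero_mem' := by simp [RIP]
  add_mem' := by
    intro a b ha hb
    simp only [RIP, Set.mem_setOf_eq, inner_add_right, map_add] at *
    rw [ha, hb]
  smul_mem' := by
    intro r y hy
    simp only [RIP, Set.mem_setOf_eq] at *
    rw [RCLike.real_smul_eq_coe_smul (K := ℂ) r y, inner_smul_real_right]
    simp only [Complex.real_smul, map_mul, Complex.conj_ofReal, hy]

lemma isClosed_realRight (x : H) : IsClosed ((realRight x : Submodule ℝ H) : Set H) := by
  have : ((realRight x : Submodule ℝ H) : Set H) =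
      (fun y : H => (starRingEnd ℂ) ⟪x, y⟫ - ⟪x, y⟫) ⁻¹' {0} := by
    ext y
    simp [realRight, RIP, sub_eq_zero]
  rw [this]
  apply IsClosed.preimage _ isClosed_singleton
  have hc : Continuous fun y : H => ⟪x, y⟫ := Continuous.inner continuous_const continuous_id
  exact ((Complex.continuous_conj).comp hc).sub hc

/-- Real inner products propagate from a generating set to the closed real span. -/
lemma rip_closure_span (s : Set H) (h : ∀ x ∈ s, ∀ y ∈ s, RIP x y) :
    ∀ x ∈ (span ℝ s).topologicalClosure, ∀ y ∈ (span ℝ s).topologicalClosure, RIP x y := by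
  have h1 : ∀ y ∈ s, (span ℝ s).topologicalClosure ≤ realLeft y := fun y hy =>
    topologicalClosure_minimal _ (span_le.2 fun x hx => h x hx y hy) (isClosed_realLeft y)
  intro x hx y hyc
  have h2 : (span ℝ s).topologicalClosure ≤ realRight x :=
    topologicalClosure_minimal _ (span_le.2 fun z hz => (h1 z hz hx)) (isClosed_realRight x)
  exact h2 hyc

/-- Invariance propagates from a generating set to the closed real span. -/
lemma invar_closure_span (s : Set H) (f : H →L[ℂ] H)
    (h : ∀ x ∈ s, f x ∈ (span ℝ s).topologicalClosure) :
    ∀ x ∈ (span ℝ s).topologicalClosure, f x ∈ (span ℝ s).topologicalClosure := by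
  set M := (span ℝ s).topologicalClosure with hM
  have hclosed : IsClosed ((M.comap ((f.restrictScalars ℝ : H →L[ℝ] H) : H →ₗ[ℝ] H)) : Set H) := by
    have : ((M.comap ((f.restrictScalars ℝ : H →L[ℝ] H) : H →ₗ[ℝ] H)) : Set H)
        = (f.restrictScalars ℝ) ⁻¹' (M : Set H) := rfl
    rw [this]
    exact IsClosed.preimage (f.restrictScalars ℝ).continuous (span ℝ s).isClosed_topologicalClosure
  have h2 : M ≤ M.comap ((f.restrictScalars ℝ : H →L[ℝ] H) : H →ₗ[ℝ] H) :=
    topologicalClosure_minimal _ (span_le.2 fun x hx => h x hx) hclosed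
  exact fun x hx => h2 hx


/-- Existence of a `Q`-invariant real form of `K`. -/
lemma exists_realForm (K : Submodule ℂ H) (Q : H →L[ℂ] H)
    (hQ : ∀ x y : H, ⟪Q x, y⟫ = ⟪x, Q y⟫) (hK : ∀ x ∈ K, Q x ∈ K) :
    ∃ E : Submodule ℝ H, (∀ x ∈ E, x ∈ K) ∧ (∀ x ∈ E, Q x ∈ E) ∧
      (∀ x ∈ E, ∀ y ∈ E, RIP x y) ∧ (∀ w ∈ K, (∀ e ∈ E, ⟪e, w⟫ = 0) → w = 0) := by
  classical
  set 𝒞 : Set (Submodule ℝ H) :=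
    {E | (∀ x ∈ E, x ∈ K) ∧ (∀ x ∈ E, Q x ∈ E) ∧ ∀ x ∈ E, ∀ y ∈ E, RIP x y} with h𝒞
  have hbot : (⊥ : Submodule ℝ H) ∈ 𝒞 := by
    refine ⟨?_, ?_, ?_⟩ <;> intro x hx <;> simp only [Submodule.mem_bot] at hx <;>
      simp [hx, RIP]
  obtain ⟨E, -, hE𝒞, hEmax⟩ : ∃ E, (⊥ : Submodule ℝ H) ≤ E ∧ Maximal (· ∈ 𝒞) E := by
    have := zorn_le_nonempty₀ 𝒞 ?_ ⊥ hbot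
    · obtain ⟨m, h1, h2⟩ := this; exact ⟨m, h1, h2⟩
    intro c hc hchain y hy
    refine ⟨sSup c, ?_, fun z hz => le_sSup hz⟩
    have hmem : ∀ x, x ∈ sSup c ↔ ∃ F ∈ c, x ∈ F := fun x =>
      Submodule.mem_sSup_of_directed ⟨y, hy⟩ hchain.directedOn
    refine ⟨?_, ?_, ?_⟩
    · intro x hx
      obtain ⟨F, hFc, hxF⟩ := (hmem x).1 hx
      exact (hc hFc).1 x hxF
    · intro x hx
      obtain ⟨F, hFc, hxF⟩ := (hmem x).1 hx
      exact (hmem _).2 ⟨F, hFc, (hc hFc).2.1 x hxF⟩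
    · intro x hx z hz
      obtain ⟨F, hFc, hxF⟩ := (hmem x).1 hx
      obtain ⟨F', hF'c, hzF'⟩ := (hmem z).1 hz
      rcases hchain.total hFc hF'c with h | h
      · exact (hc hF'c).2.2 x (h hxF) z hzF'
      · exact (hc hFc).2.2 x hxF z (h hzF')
  obtain ⟨hEK, hEQ, hErip⟩ := hE𝒞
  refine ⟨E, hEK, hEQ, hErip, ?_⟩
  intro w hwK hw
  by_contra hw0
  -- the enlarged submodule
  set g : Set H := (E : Set H) ∪ Set.range (fun n : ℕ => (Q ^ n) w) with hg
  set E' : Submodule ℝ H := span ℝ g with hE'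
  have hQpow_apply : ∀ n : ℕ, ∀ x : H, (Q ^ (n + 1)) x = Q ((Q ^ n) x) := by
    intro n x
    rw [pow_succ']
    rfl
  have hQpowK : ∀ n : ℕ, (Q ^ n) w ∈ K := by
    intro n
    induction n with
    | zero => simpa using hwK
    | succ n ih => rw [hQpow_apply]; exact hK _ ih
  have hQpow_symm : ∀ n : ℕ, ∀ x y : H, ⟪(Q ^ n) x, y⟫ = ⟪x, (Q ^ n) y⟫ := by
    intro n
    induction n with
    | zero => simp
    | succ n ih =>
      intro x y
      rw [hQpow_apply, hQpow_apply, hQ, ih]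
      congr 1
      rw [← ContinuousLinearMap.mul_apply, ← pow_succ, hQpow_apply]
  have hEQn : ∀ n : ℕ, ∀ e ∈ E, ⟪e, (Q ^ n) w⟫ = 0 := by
    intro n
    induction n with
    | zero => simpa using hw
    | succ n ih =>
      intro e he
      rw [hQpow_apply, ← hQ]
      exact ih _ (hEQ e he)
  have hgK : ∀ x ∈ g, x ∈ K := by
    rintro x (hx | ⟨n, rfl⟩)
    · exact hEK x hx
    · exact hQpowK n
  have hgrip : ∀ x ∈ g, ∀ y ∈ g, RIP x y := by
    rintro x (hx | ⟨n, rfl⟩) y (hy | ⟨m, rfl⟩)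
    · exact hErip x hx y hy
    · unfold RIP; rw [hEQn _ x hx]; simp
    · unfold RIP
      have h1 : ⟪(Q ^ n) w, y⟫ = 0 := by rw [← inner_conj_symm, hEQn _ y hy, map_zero]
      rw [h1, map_zero]
    · unfold RIP
      have h1 : ⟪(Q ^ n) w, (Q ^ m) w⟫ = ⟪w, (Q ^ (n + m)) w⟫ := by
        rw [hQpow_symm n w ((Q ^ m) w), ← ContinuousLinearMap.mul_apply, ← pow_add Q n m]
      rw [h1, inner_conj_symm, hQpow_symm]
  have hE'rip : ∀ x ∈ E', ∀ y ∈ E', RIP x y := by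
    intro x hx y hy
    exact rip_closure_span g hgrip x (E'.le_topologicalClosure hx) y (E'.le_topologicalClosure hy)
  have hE'K : ∀ x ∈ E', x ∈ K := by
    intro x hx
    have : E' ≤ K.restrictScalars ℝ := span_le.2 fun z hz => hgK z hz
    exact this hx
  have hE'Q : ∀ x ∈ E', Q x ∈ E' := by
    intro x hx
    have : E' ≤ E'.comap ((Q.restrictScalars ℝ : H →L[ℝ] H) : H →ₗ[ℝ] H) := by
      refine span_le.2 ?_
      rintro z (hz | ⟨n, rfl⟩)
      · exact subset_span (Or.inl (hEQ z hz))
      · exact subset_span (Or.inr ⟨n + 1, hQpow_apply n w⟩)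
    exact this hx
  have hE'𝒞 : E' ∈ 𝒞 := ⟨hE'K, hE'Q, hE'rip⟩
  have hEE' : E ≤ E' := fun z hz => subset_span (Or.inl hz)
  have hwE' : w ∈ E' := subset_span (Or.inr ⟨0, by simp⟩)
  have : w ∈ E := hEmax hE'𝒞 hEE' hwE'
  exact hw0 ((inner_self_eq_zero (𝕜 := ℂ)).1 (hw w this))

set_option maxHeartbeats 2000000 in
lemma main [CompleteSpace H] (T : H →L[ℂ] H) (hT : T ∘L T = 0) :
    ∃ C : H → H,
      ((∀ (a : ℂ) (x y : H), C (a • x + y) = (starRingEnd ℂ a) • C x + C y) ∧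
       (∀ x, ‖C x‖ = ‖x‖) ∧ (∀ x, C (C x) = x)) ∧ ∀ x, T x = C (adjoint T (C x)) := by
  classical
  have hTT : ∀ x, T (T x) = 0 := fun x => by
    have := congrArg (fun S : H →L[ℂ] H => S x) hT
    simpa using this
  have hnn : (0 : H →L[ℂ] H) ≤ adjoint T * T := star_mul_self_nonneg T
  set P : H →L[ℂ] H := CFC.sqrt (adjoint T * T) with hPdef
  have hPsq : P * P = adjoint T * T := CFC.sqrt_mul_sqrt_self _ hnn
  have hPpos : (0 : H →L[ℂ] H) ≤ P := CFC.sqrt_nonneg _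
  have hPsa : IsSelfAdjoint P := .of_nonneg hPpos
  have hPsymm : ∀ x y : H, ⟪P x, y⟫ = ⟪x, P y⟫ := fun x y =>
    ((isSelfAdjoint_iff_isSymmetric).1 hPsa) x y
  have hPP : ∀ y, P (P y) = adjoint T (T y) := fun y => by
    have := congrArg (fun S : H →L[ℂ] H => S y) hPsq
    simpa [ContinuousLinearMap.mul_apply] using this
  have hkey : ∀ x y : H, ⟪P x, P y⟫ = ⟪T x, T y⟫ := by
    intro x y
    rw [hPsymm, hPP, adjoint_inner_right]
  have hPker : ∀ x, P x = 0 ↔ T x = 0 := by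
    intro x
    constructor <;> intro h
    · have h2 := hkey x x
      rw [h, inner_zero_left] at h2
      exact inner_self_eq_zero.1 h2.symm
    · have h2 := hkey x x
      rw [h, inner_zero_left] at h2
      exact inner_self_eq_zero.1 h2
  set K2 : Submodule ℂ H := (LinearMap.ker (T : H →ₗ[ℂ] H))ᗮ with hK2def
  have hranP : ∀ x, P x ∈ K2 := by
    intro x
    rw [Submodule.mem_orthogonal]
    intro u hu
    rw [← hPsymm, (hPker u).2 hu, inner_zero_left]
  have hK2T : ∀ y ∈ K2, adjoint T y = 0 := by
    intro y hy
    have h1 : ⟪adjoint T y, adjoint T y⟫ = ⟪y, T (adjoint T y)⟫ := adjoint_inner_left T _ y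
    have h2 : T (adjoint T y) ∈ LinearMap.ker (T : H →ₗ[ℂ] H) := by
      simp only [LinearMap.mem_ker]
      exact hTT _
    have h3 : ⟪T (adjoint T y), y⟫ = 0 := (Submodule.mem_orthogonal _ y).1 hy _ h2
    have h4 : ⟪y, T (adjoint T y)⟫ = 0 := by rw [← inner_conj_symm, h3, map_zero]
    rw [h4] at h1
    exact inner_self_eq_zero.1 h1
  -- real forms
  obtain ⟨E2, hE2K, hE2P, hE2rip, hE2dens⟩ :=
    exists_realForm K2 P hPsymm (fun x _ => hranP x)
  set N : Submodule ℂ H := LinearMap.ker (T : H →ₗ[ℂ] H) ⊓ LinearMap.ker ((adjoint T : H →L[ℂ] H) : H →ₗ[ℂ] H) with hNdef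
  obtain ⟨EN, hENN, -, hENrip, hENdens⟩ :=
    exists_realForm N (0 : H →L[ℂ] H) (by simp) (fun x _ => by simp)
  -- generators
  set g1 : H → H := fun y => T y + P y with hg1def
  set g2 : H → H := fun y => Complex.I • (T y - P y) with hg2def
  set G : Set H := (g1 '' E2 ∪ g2 '' E2) ∪ (EN : Set H) with hGdef
  set Ehat : Submodule ℝ H := (span ℝ G).topologicalClosure with hEhatdef
  -- atomic inner product facts
  have a1 : ∀ y z : H, ⟪T y, T z⟫ = ⟪y, P (P z)⟫ := fun y z => by
    rw [hPP, adjoint_inner_right]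
  have a2 : ∀ y z : H, ⟪P y, P z⟫ = ⟪y, P (P z)⟫ := fun y z => hPsymm y (P z)
  have a4 : ∀ y z : H, ⟪T y, P z⟫ = 0 := fun y z => by
    rw [← hPsymm, (hPker (T y)).2 (hTT y), inner_zero_left]
  have a5 : ∀ y z : H, ⟪P y, T z⟫ = 0 := fun y z => by
    rw [← inner_conj_symm, a4, map_zero]
  have a6 : ∀ (x : H), ∀ n ∈ EN, ⟪T x, n⟫ = 0 := by
    intro x n hn
    have hn2 : adjoint T n = 0 := ((hENN n hn).2 : n ∈ LinearMap.ker ((adjoint T : H →L[ℂ] H) : H →ₗ[ℂ] H))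
    rw [← adjoint_inner_right, hn2, inner_zero_right]
  have a7 : ∀ (x : H), ∀ n ∈ EN, ⟪P x, n⟫ = 0 := by
    intro x n hn
    have hn1 : T n = 0 := ((hENN n hn).1 : n ∈ LinearMap.ker (T : H →ₗ[ℂ] H))
    rw [hPsymm, (hPker n).2 hn1, inner_zero_right]
  have a8 : ∀ (x : H), ∀ n ∈ EN, ⟪n, T x⟫ = 0 := fun x n hn => by
    rw [← inner_conj_symm, a6 x n hn, map_zero]
  have a9 : ∀ (x : H), ∀ n ∈ EN, ⟪n, P x⟫ = 0 := fun x n hn => by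
    rw [← inner_conj_symm, a7 x n hn, map_zero]
  have a3 : ∀ y ∈ E2, ∀ z ∈ E2, RIP y (P (P z)) := fun y hy z hz =>
    hE2rip y hy _ (hE2P _ (hE2P _ hz))
  -- pairwise real inner products on G
  have h11 : ∀ y ∈ E2, ∀ z ∈ E2, RIP (g1 y) (g1 z) := by
    intro y hy z hz
    have e : ⟪g1 y, g1 z⟫ = ⟪y, P (P z)⟫ + ⟪y, P (P z)⟫ := by
      simp only [hg1def, inner_add_left, inner_add_right, a1, a2, a4, a5]
      ring
    unfold RIP
    rw [e, map_add, a3 y hy z hz]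
  have h12 : ∀ y ∈ E2, ∀ z ∈ E2, RIP (g1 y) (g2 z) := by
    intro y hy z hz
    have e : ⟪g1 y, g2 z⟫ = 0 := by
      simp only [hg1def, hg2def, inner_smul_right, inner_add_left, inner_sub_right,
        a1, a2, a4, a5]
      ring
    unfold RIP
    rw [e, map_zero]
  have h22 : ∀ y ∈ E2, ∀ z ∈ E2, RIP (g2 y) (g2 z) := by
    intro y hy z hz
    have e : ⟪g2 y, g2 z⟫ = ⟪y, P (P z)⟫ + ⟪y, P (P z)⟫ := by
      simp only [hg2def, inner_smul_right, inner_smul_left, inner_sub_left, inner_sub_right,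
        a1, a2, a4, a5, Complex.conj_I]
      ring_nf
      rw [Complex.I_sq]
      ring
    unfold RIP
    rw [e, map_add, a3 y hy z hz]
  have h1N : ∀ y : H, ∀ n ∈ EN, RIP (g1 y) n := by
    intro y n hn
    have e : ⟪g1 y, n⟫ = 0 := by
      simp only [hg1def, inner_add_left, a6 y n hn, a7 y n hn, add_zero]
    unfold RIP
    rw [e, map_zero]
  have h2N : ∀ y : H, ∀ n ∈ EN, RIP (g2 y) n := by
    intro y n hn
    have e : ⟪g2 y, n⟫ = 0 := by
      simp only [hg2def, inner_smul_left, inner_sub_left, a6 y n hn, a7 y n hn]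
      ring
    unfold RIP
    rw [e, map_zero]
  have hGrip : ∀ x ∈ G, ∀ z ∈ G, RIP x z := by
    rintro x ((⟨y, hy, rfl⟩ | ⟨y, hy, rfl⟩) | hx) z ((⟨u, hu, rfl⟩ | ⟨u, hu, rfl⟩) | hz)
    · exact h11 y hy u hu
    · exact h12 y hy u hu
    · exact h1N y z hz
    · exact (h12 u hu y hy).comm
    · exact h22 y hy u hu
    · exact h2N y z hz
    · exact (h1N u x hx).comm
    · exact (h2N u x hx).comm
    · exact hENrip x hx z hz
  have hErip : ∀ x ∈ Ehat, ∀ y ∈ Ehat, RIP x y := rip_closure_span G hGrip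
  have hGE : G ⊆ (Ehat : Set H) := fun x hx => (span ℝ G).le_topologicalClosure (subset_span hx)
  -- invariance under X = T + T* and Y = I (T - T*)
  set X : H →L[ℂ] H := T + adjoint T with hXdef
  set Y : H →L[ℂ] H := Complex.I • (T - adjoint T) with hYdef
  have hTstarT : ∀ y : H, adjoint T (T y) = P (P y) := fun y => (hPP y).symm
  have hTstarP : ∀ y ∈ E2, adjoint T (P y) = 0 := fun y _ => hK2T _ (hranP y)
  have hXg1 : ∀ y ∈ E2, X (g1 y) = g1 (P y) := by
    intro y hy
    simp only [hXdef, hg1def, ContinuousLinearMap.add_apply, map_add, hTT, hTstarT,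
      hTstarP y hy, zero_add, add_zero]
    abel
  have hXg2 : ∀ y ∈ E2, X (g2 y) = -(g2 (P y)) := by
    intro y hy
    simp only [hXdef, hg2def, ContinuousLinearMap.add_apply, map_smul, map_sub, hTT, hTstarT,
      hTstarP y hy, zero_add, add_zero, sub_zero, zero_sub]
    rw [← smul_neg]
    congr 1
    abel
  have hYg1 : ∀ y ∈ E2, Y (g1 y) = g2 (P y) := by
    intro y hy
    simp only [hYdef, hg2def, hg1def, ContinuousLinearMap.smul_apply,
      ContinuousLinearMap.sub_apply, map_add, hTT, hTstarT, hTstarP y hy, zero_add, add_zero]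
    module
  have hYg2 : ∀ y ∈ E2, Y (g2 y) = g1 (P y) := by
    intro y hy
    simp only [hYdef, hg2def, hg1def, ContinuousLinearMap.smul_apply,
      ContinuousLinearMap.sub_apply, map_smul, map_sub, hTT, hTstarT, hTstarP y hy,
      zero_sub, sub_zero, zero_add]
    match_scalars <;> simp [Complex.I_sq] <;> try ring
  have hXEN : ∀ n ∈ EN, X n = 0 := by
    intro n hn
    have h1 : T n = 0 := ((hENN n hn).1 : n ∈ LinearMap.ker (T : H →ₗ[ℂ] H))
    have h2 : adjoint T n = 0 := ((hENN n hn).2 : n ∈ LinearMap.ker ((adjoint T : H →L[ℂ] H) : H →ₗ[ℂ] H))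
    simp [hXdef, h1, h2]
  have hYEN : ∀ n ∈ EN, Y n = 0 := by
    intro n hn
    have h1 : T n = 0 := ((hENN n hn).1 : n ∈ LinearMap.ker (T : H →ₗ[ℂ] H))
    have h2 : adjoint T n = 0 := ((hENN n hn).2 : n ∈ LinearMap.ker ((adjoint T : H →L[ℂ] H) : H →ₗ[ℂ] H))
    simp [hYdef, h1, h2]
  have hg1G : ∀ y ∈ E2, g1 y ∈ G := fun y hy => Or.inl (Or.inl ⟨y, hy, rfl⟩)
  have hg2G : ∀ y ∈ E2, g2 y ∈ G := fun y hy => Or.inl (Or.inr ⟨y, hy, rfl⟩)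
  have hXE : ∀ x ∈ Ehat, X x ∈ Ehat := by
    apply invar_closure_span
    rintro x ((⟨y, hy, rfl⟩ | ⟨y, hy, rfl⟩) | hx)
    · rw [hXg1 y hy]
      exact hGE (hg1G _ (hE2P y hy))
    · rw [hXg2 y hy]
      exact Ehat.neg_mem (hGE (hg2G _ (hE2P y hy)))
    · rw [hXEN x hx]
      exact Ehat.zero_mem
  have hYE : ∀ x ∈ Ehat, Y x ∈ Ehat := by
    apply invar_closure_span
    rintro x ((⟨y, hy, rfl⟩ | ⟨y, hy, rfl⟩) | hx)
    · rw [hYg1 y hy]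
      exact hGE (hg2G _ (hE2P y hy))
    · rw [hYg2 y hy]
      exact hGE (hg1G _ (hE2P y hy))
    · rw [hYEN x hx]
      exact Ehat.zero_mem
  -- density
  have hdens : ∀ w : H, (∀ e ∈ Ehat, ⟪e, w⟫ = 0) → w = 0 := by
    intro w hw
    have hg1w : ∀ y ∈ E2, ⟪T y, w⟫ + ⟪P y, w⟫ = 0 := by
      intro y hy
      have := hw _ (hGE (hg1G y hy))
      rwa [hg1def, inner_add_left] at this
    have hg2w : ∀ y ∈ E2, ⟪T y, w⟫ - ⟪P y, w⟫ = 0 := by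
      intro y hy
      have := hw _ (hGE (hg2G y hy))
      rw [hg2def, inner_smul_left, inner_sub_left, Complex.conj_I, mul_eq_zero] at this
      rcases this with h | h
      · exfalso
        rw [neg_eq_zero] at h
        exact Complex.I_ne_zero h
      · exact h
    have hTyw : ∀ y ∈ E2, ⟪T y, w⟫ = 0 := by
      intro y hy
      have h1 := hg1w y hy
      have h2 := hg2w y hy
      have : ⟪T y, w⟫ + ⟪T y, w⟫ = 0 := by linear_combination h1 + h2
      have h3 : (2 : ℂ) * ⟪T y, w⟫ = 0 := by ring_nf; linear_combination this
      simpa using mul_eq_zero.1 h3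
    have hPyw : ∀ y ∈ E2, ⟪P y, w⟫ = 0 := by
      intro y hy
      have h1 := hg1w y hy
      rw [hTyw y hy, zero_add] at h1
      exact h1
    have hPw : P w = 0 := by
      apply hE2dens _ (hranP w)
      intro e he
      rw [← hPsymm]
      exact hPyw e he
    have hTw : T w = 0 := by
      have h2 := hkey w w
      rw [hPw, inner_zero_left] at h2
      exact inner_self_eq_zero.1 h2.symm
    have hTsw : adjoint T w = 0 := by
      apply hE2dens _ ?_ ?_
      · rw [Submodule.mem_orthogonal]
        intro u hu
        rw [adjoint_inner_right, (show T u = 0 from LinearMap.mem_ker.1 hu), inner_zero_left]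
      · intro e he
        rw [adjoint_inner_right]
        exact hTyw e he
    have hwN : w ∈ N := by
      rw [hNdef, Submodule.mem_inf]
      exact ⟨LinearMap.mem_ker.2 hTw, LinearMap.mem_ker.2 hTsw⟩
    apply hENdens w hwN
    intro e he
    exact hw e (hGE (Or.inr he))
  -- the orthogonal projection onto Ehat over ℝ
  haveI : CompleteSpace Ehat := (span ℝ G).isClosed_topologicalClosure.completeSpace_coe
  set pE := orthogonalProjection Ehat with hpEdef
  set Cm : H →L[ℝ] H := (2 : ℝ) • (Ehat.subtypeL.comp pE) - ContinuousLinearMap.id ℝ H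
    with hCmdef
  set C : H → H := fun x => Cm x with hCdef
  have hCapply : ∀ x, C x = (2 : ℝ) • (pE x : H) - x := fun x => rfl
  have hCe : ∀ e ∈ Ehat, C e = e := by
    intro e he
    rw [hCapply, (show (pE e : H) = e from Submodule.starProjection_eq_self_iff.2 he), two_smul]
    abel
  -- the real-orthogonal complement of Ehat is I • Ehat
  have him0 : ∀ e ∈ Ehat, ∀ b ∈ Ehat, @inner ℝ H _ e (Complex.I • b) = 0 := by
    intro e he b hb
    have h1 : @inner ℝ H _ e (Complex.I • b) = (⟪e, Complex.I • b⟫).re := rfl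
    rw [h1, inner_smul_right]
    have h2 := (hErip e he b hb).im_eq
    simp [Complex.mul_re, h2]
  set smI : H →L[ℝ] H := ((-Complex.I : ℂ) • ContinuousLinearMap.id ℂ H).restrictScalars ℝ
    with hsmIdef
  set F : Submodule ℝ H := Ehat.comap (smI : H →ₗ[ℝ] H) with hFdef
  have hFmem : ∀ x : H, x ∈ F ↔ (-Complex.I) • x ∈ Ehat := by
    intro x
    rw [hFdef, Submodule.mem_comap]
    rfl
  have hFmem' : ∀ x : H, (Complex.I • x ∈ F ↔ x ∈ Ehat) := by
    intro x
    rw [hFmem]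
    have : (-Complex.I) • Complex.I • x = x := by
      rw [smul_smul]
      simp
    rw [this]
  have hFclosed : IsClosed (F : Set H) := by
    have : (F : Set H) = smI ⁻¹' (Ehat : Set H) := rfl
    rw [this]
    exact IsClosed.preimage smI.continuous (span ℝ G).isClosed_topologicalClosure
  haveI : CompleteSpace F := hFclosed.completeSpace_coe
  have hFsub : F ≤ Ehatᗮ := by
    intro x hx
    rw [Submodule.mem_orthogonal]
    intro u hu
    have hb : (-Complex.I) • x ∈ Ehat := (hFmem x).1 hx
    have hxb : x = Complex.I • ((-Complex.I) • x) := by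
      rw [smul_smul]
      simp
    rw [hxb]
    exact him0 u hu _ hb
  have hFsup : Ehatᗮ ≤ F := by
    intro c hc
    set c' : H := c - (orthogonalProjection F c : H) with hc'def
    have hPFc : ((orthogonalProjection F c : H)) ∈ F := SetLike.coe_mem _
    have hc'F : ∀ w ∈ F, @inner ℝ H _ c' w = 0 := fun w hw =>
      Submodule.starProjection_inner_eq_zero (K := F) c w hw
    have hc'E : ∀ e ∈ Ehat, @inner ℝ H _ e c' = 0 := by
      intro e he
      rw [hc'def, inner_sub_right]
      have h1 : @inner ℝ H _ e c = 0 := (Submodule.mem_orthogonal _ c).1 hc e he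
      have h2 : @inner ℝ H _ e ((orthogonalProjection F c : H)) = 0 :=
        (Submodule.mem_orthogonal _ _).1 (hFsub hPFc) e he
      rw [h1, h2, sub_zero]
    have hc'0 : c' = 0 := by
      apply hdens
      intro e he
      have hre : (⟪e, c'⟫).re = 0 := hc'E e he
      have him : (⟪e, c'⟫).im = 0 := by
        have h3 : Complex.I • e ∈ F := (hFmem' e).2 he
        have h4 : @inner ℝ H _ c' (Complex.I • e) = 0 := hc'F _ h3
        have h5 : @inner ℝ H _ (Complex.I • e) c' = 0 := by rwa [real_inner_comm]
        have h6 : @inner ℝ H _ (Complex.I • e) c' = (⟪Complex.I • e, c'⟫).re := rfl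
        rw [h6, inner_smul_left, Complex.conj_I] at h5
        simpa [Complex.mul_re] using h5
      exact Complex.ext hre him
    rw [hc'def, sub_eq_zero] at hc'0
    rw [hc'0]
    exact hPFc
  -- behaviour of the projection under multiplication by I
  have hPI : ∀ x : H, ((pE (Complex.I • x) : H)) = Complex.I • x - Complex.I • (pE x : H) := by
    intro x
    apply Submodule.eq_starProjection_of_mem_orthogonal (K := Ehat)
    · have hbF : x - (pE x : H) ∈ F := hFsup (Submodule.sub_starProjection_mem_orthogonal (K := Ehat) x)
      have h1 : (-Complex.I) • (x - (pE x : H)) ∈ Ehat := (hFmem _).1 hbF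
      have h3 : Complex.I • (x - (pE x : H)) ∈ Ehat := by
        have h2 : Complex.I • (x - (pE x : H)) = -((-Complex.I) • (x - (pE x : H))) := by
          rw [neg_smul, neg_neg]
        rw [h2]
        exact Ehat.neg_mem h1
      rwa [smul_sub] at h3
    · have h7 : Complex.I • x - (Complex.I • x - Complex.I • (pE x : H))
          = Complex.I • (pE x : H) := by abel
      rw [h7]
      apply hFsub
      rw [hFmem]
      have : (-Complex.I) • Complex.I • ((pE x : H)) = (pE x : H) := by
        rw [smul_smul]
        simp
      rw [this]
      exact SetLike.coe_mem _
  -- conjugation properties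
  have hCi : ∀ x, C (Complex.I • x) = -(Complex.I • C x) := by
    intro x
    rw [hCapply, hCapply, hPI x]
    module
  have hC0 : C 0 = 0 := by
    show Cm 0 = 0
    exact map_zero Cm
  have hCadd : ∀ x y, C (x + y) = C x + C y := fun x y => map_add Cm x y
  have hCrsmul : ∀ (r : ℝ) (x : H), C (r • x) = r • C x := fun r x => map_smul Cm r x
  have hrs : ∀ (r : ℝ) (x : H), r • x = (Complex.ofReal r) • x := fun r x =>
    RCLike.real_smul_eq_coe_smul (K := ℂ) r x
  have hCconj : ∀ (a : ℂ) (x y : H), C (a • x + y) = (starRingEnd ℂ) a • C x + C y := by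
    intro a x y
    rw [hCadd]
    congr 1
    have hax : a • x = (a.re : ℝ) • x + (a.im : ℝ) • (Complex.I • x) := by
      rw [hrs, hrs, smul_smul, ← add_smul]
      congr 1
      simp [Complex.ext_iff]
    rw [hax, hCadd, hCrsmul, hCrsmul, hCi]
    have hconj : (starRingEnd ℂ) a = (a.re : ℂ) - (a.im : ℂ) * Complex.I := by
      simp [Complex.ext_iff]
    rw [hconj, hrs a.re (C x), hrs a.im (-(Complex.I • C x))]
    module
  have hCiso : ∀ x, ‖C x‖ = ‖x‖ := by
    intro x
    have hab : @inner ℝ H _ ((pE x : H)) (x - (pE x : H)) = 0 := by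
      rw [real_inner_comm]
      exact Submodule.starProjection_inner_eq_zero (K := Ehat) x _ (SetLike.coe_mem _)
    have hCx : C x = (pE x : H) - (x - (pE x : H)) := by
      rw [hCapply, two_smul]
      abel
    have hxab : x = (pE x : H) + (x - (pE x : H)) := by abel
    have h1 : ‖C x‖ ^ 2 = ‖x‖ ^ 2 := by
      have hL : ‖C x‖ ^ 2 = ‖(pE x : H)‖ ^ 2 + ‖x - (pE x : H)‖ ^ 2 := by
        rw [hCx, norm_sub_sq_real, hab]
        ring
      have hR : ‖x‖ ^ 2 = ‖(pE x : H)‖ ^ 2 + ‖x - (pE x : H)‖ ^ 2 := by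
        conv_lhs => rw [hxab]
        rw [norm_add_sq_real, hab]
        ring
      rw [hL, hR]
    have h2 := congrArg Real.sqrt h1
    rwa [Real.sqrt_sq (norm_nonneg _), Real.sqrt_sq (norm_nonneg _)] at h2
  have hCC : ∀ x, C (C x) = x := by
    intro x
    have hpCx : pE (C x) = pE x := by
      rw [hCapply, map_sub, map_smul, orthogonalProjection_mem_subspace_eq_self, two_smul]
      abel
    rw [hCapply (C x), hpCx, hCapply x, two_smul]
    abel
  -- the key identity on Ehat
  have hCT : ∀ e ∈ Ehat, C (adjoint T e) = T e := by
    intro e he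
    have hu : (1/2 : ℝ) • X e ∈ Ehat := Ehat.smul_mem _ (hXE e he)
    have hv : (1/2 : ℝ) • Y e ∈ Ehat := Ehat.smul_mem _ (hYE e he)
    have hXe : X e = T e + adjoint T e := rfl
    have hYe : Y e = Complex.I • (T e - adjoint T e) := rfl
    have hdecomp : adjoint T e = (1/2 : ℝ) • X e + Complex.I • ((1/2 : ℝ) • Y e) := by
      rw [hrs, hrs, hXe, hYe]
      match_scalars <;> (ring_nf; simp [Complex.I_sq]; try ring)
    rw [hdecomp, hCadd, hCi, hCe _ hu, hCe _ hv]
    rw [hrs (1/2 : ℝ) (X e), hrs (1/2 : ℝ) (Y e), hXe, hYe]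
    match_scalars <;> (ring_nf; simp [Complex.I_sq]; try ring)
  -- conclude by density
  have hCsmul : ∀ (a : ℂ) (x : H), C (a • x) = (starRingEnd ℂ) a • C x := by
    intro a x
    have := hCconj a x 0
    simpa [hC0] using this
  set S : H → H := fun x => C (adjoint T (C x)) with hSdef
  have hSadd : ∀ x y, S (x + y) = S x + S y := by
    intro x y
    simp only [hSdef, hCadd, map_add]
  have hSsmul : ∀ (a : ℂ) (x : H), S (a • x) = a • S x := by
    intro a x
    simp only [hSdef]
    rw [hCsmul, map_smul, hCsmul, Complex.conj_conj]
  have hSe : ∀ e ∈ Ehat, S e = T e := by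
    intro e he
    simp only [hSdef]
    rw [hCe e he]
    exact hCT e he
  have hS0 : S 0 = 0 := by
    simp only [hSdef, hC0, map_zero]
  set M : Submodule ℂ H := span ℂ (Ehat : Set H) with hMdef
  have hMtop : M.topologicalClosure = ⊤ := by
    rw [Submodule.topologicalClosure_eq_top_iff, Submodule.eq_bot_iff]
    intro w hw
    apply hdens
    intro e he
    exact (Submodule.mem_orthogonal _ w).1 hw e (subset_span he)
  have hMdense : Dense (M : Set H) := Submodule.dense_iff_topologicalClosure_eq_top.2 hMtop
  have hSM : ∀ x ∈ M, S x = T x := by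
    intro x hx
    induction hx using Submodule.span_induction with
    | mem e he => exact hSe e he
    | zero => rw [hS0, map_zero]
    | add u v hu hv h1 h2 => rw [hSadd, h1, h2, map_add]
    | smul a u hu h1 => rw [hSsmul, h1, map_smul]
  have hScont : Continuous S :=
    Cm.continuous.comp ((adjoint T).continuous.comp Cm.continuous)
  have hST : S = fun x => T x :=
    Continuous.ext_on hMdense hScont T.continuous hSM
  refine ⟨C, ⟨hCconj, hCiso, hCC⟩, ?_⟩
  intro x
  have := congrFun hST x
  rw [← this]


end NilpCSO

end

end NilpCSOSection

/-- If `T² = 0` then `T` is a complex symmetric operator. -/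
theorem nilpotent_order_two_is_complex_symmetric
    {H : Type*} [NormedAddCommGroup H] [InnerProductSpace ℂ H] [CompleteSpace H]
    (T : H →L[ℂ] H) (hT : T ∘L T = 0) :
    ∃ C : H → H, IsConjugation C ∧ ∀ x, T x = C (adjoint T (C x)) := by
  obtain ⟨C, hC1, hC2⟩ := NilpCSO.main T hT
  exact ⟨C, hC1, hC2⟩
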